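/- Let x, y be points on the unit sphere S² ⊂ ℝ³ and let a ∈ [0, π/2]. The spherical caps C(x,a) and C(y,a) of angular radius a centered at x and y have nonempty intersection if and only if the angular distance between the centers satisfies θ(x,y) ≤ 2a. -/
import Mathlib


open MeasureTheory Real Set
open scoped RealInnerProductSpace

/-- The unit sphere `S²` in `ℝ³`. -/
noncomputable def S2 : Set (EuclideanSpace ℝ (Fin 3)) :=
  Metric.sphere (0 : EuclideanSpace ℝ (Fin 3)) 1

/-- The angular distance `θ(x,y) = arccos ⟪x,y⟫` between two points of the sphere. -/
noncomputable def angDist (x y : EuclideanSpace ℝ (Fin 3)) : ℝ :=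
  Real.arccos ⟪x, y⟫

/-- The spherical cap of angular radius `a` centered at `y ∈ S²`. -/
noncomputable def cap (y : EuclideanSpace ℝ (Fin 3)) (a : ℝ) : Set (EuclideanSpace ℝ (Fin 3)) :=
  {x | x ∈ S2 ∧ angDist x y ≤ a}

lemma arccos_antitone' {s t : ℝ} (h : s ≤ t) : Real.arccos t ≤ Real.arccos s := by
  unfold Real.arccos
  have := Real.monotone_arcsin h
  linarith

/-- A purely real version of the spherical triangle inequality. -/
lemma real_arccos_triangle {c1 c2 t : ℝ} (h1 : |c1| ≤ 1) (h2 : |c2| ≤ 1)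
    (hkey : (t - c1 * c2) ^ 2 ≤ (1 - c1 ^ 2) * (1 - c2 ^ 2)) :
    Real.arccos t ≤ Real.arccos c1 + Real.arccos c2 := by
  obtain ⟨h1a, h1b⟩ := abs_le.mp h1
  obtain ⟨h2a, h2b⟩ := abs_le.mp h2
  set α := Real.arccos c1 with hα
  set β := Real.arccos c2 with hβ
  by_cases h : α + β ≤ π
  · set s1 := Real.sqrt (1 - c1 ^ 2) with hs1
    set s2 := Real.sqrt (1 - c2 ^ 2) with hs2
    have hs1sq : s1 ^ 2 = 1 - c1 ^ 2 := Real.sq_sqrt (by nlinarith)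
    have hs2sq : s2 ^ 2 = 1 - c2 ^ 2 := Real.sq_sqrt (by nlinarith)
    have hs1n : 0 ≤ s1 := Real.sqrt_nonneg _
    have hs2n : 0 ≤ s2 := Real.sqrt_nonneg _
    have key : c1 * c2 - s1 * s2 ≤ t := by
      nlinarith [sq_nonneg (t - c1 * c2 + s1 * s2), mul_nonneg hs1n hs2n]
    have hcosab : Real.cos (α + β) = c1 * c2 - s1 * s2 := by
      rw [Real.cos_add, hα, hβ, Real.cos_arccos h1a h1b, Real.cos_arccos h2a h2b,
        Real.sin_arccos, Real.sin_arccos]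
    have h0 : 0 ≤ α + β := by
      have := Real.arccos_nonneg c1
      have := Real.arccos_nonneg c2
      linarith
    calc Real.arccos t ≤ Real.arccos (Real.cos (α + β)) := by
          apply arccos_antitone'; rw [hcosab]; exact key
      _ = α + β := Real.arccos_cos h0 h
  · have := Real.arccos_le_pi t
    linarith

lemma abs_inner_le_one' {E : Type*} [NormedAddCommGroup E] [InnerProductSpace ℝ E]
    {x y : E} (hx : ‖x‖ = 1) (hy : ‖y‖ = 1) : |⟪x, y⟫| ≤ 1 := by
  have := abs_real_inner_le_norm x y
  rw [hx, hy] at this; simpa using this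

/-- Spherical triangle inequality for unit vectors. -/
lemma ang_triangle {E : Type*} [NormedAddCommGroup E] [InnerProductSpace ℝ E]
    {x y z : E} (hx : ‖x‖ = 1) (hy : ‖y‖ = 1) (hz : ‖z‖ = 1) :
    Real.arccos ⟪x, y⟫ ≤ Real.arccos ⟪x, z⟫ + Real.arccos ⟪z, y⟫ := by
  have hxx : ⟪x, x⟫ = 1 := by rw [real_inner_self_eq_norm_sq, hx]; norm_num
  have hyy : ⟪y, y⟫ = 1 := by rw [real_inner_self_eq_norm_sq, hy]; norm_num
  have hzz : ⟪z, z⟫ = 1 := by rw [real_inner_self_eq_norm_sq, hz]; norm_num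
  refine real_arccos_triangle (abs_inner_le_one' hx hz) (abs_inner_le_one' hz hy) ?_
  have hcs := real_inner_mul_inner_self_le (x - ⟪x, z⟫ • z) (y - ⟪z, y⟫ • z)
  have e1 : ⟪x - ⟪x, z⟫ • z, y - ⟪z, y⟫ • z⟫ = ⟪x, y⟫ - ⟪x, z⟫ * ⟪z, y⟫ := by
    simp only [inner_sub_left, inner_sub_right, real_inner_smul_left, real_inner_smul_right,
      hzz]
    ring
  have e2 : ⟪x - ⟪x, z⟫ • z, x - ⟪x, z⟫ • z⟫ = 1 - ⟪x, z⟫ ^ 2 := by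
    simp only [inner_sub_left, inner_sub_right, real_inner_smul_left, real_inner_smul_right,
      hzz, hxx, real_inner_comm z x]
    ring
  have e3 : ⟪y - ⟪z, y⟫ • z, y - ⟪z, y⟫ • z⟫ = 1 - ⟪z, y⟫ ^ 2 := by
    simp only [inner_sub_left, inner_sub_right, real_inner_smul_left, real_inner_smul_right,
      hzz, hyy, real_inner_comm y z]
    ring
  rw [e1, e2, e3] at hcs
  nlinarith [hcs]

lemma half_sqrt_aux {t : ℝ} (h : -1 < t) :
    (Real.sqrt ((1 + t) / 2) * 2)⁻¹ * (1 + t) = Real.sqrt ((1 + t) / 2) := by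
  have hs : Real.sqrt ((1 + t) / 2) * Real.sqrt ((1 + t) / 2) = (1 + t) / 2 :=
    Real.mul_self_sqrt (by linarith)
  have hspos : 0 < Real.sqrt ((1 + t) / 2) := Real.sqrt_pos.mpr (by linarith)
  rw [inv_mul_eq_div, div_eq_iff (by positivity)]
  nlinarith [hs]

lemma mem_S2_norm {x : EuclideanSpace ℝ (Fin 3)} (hx : x ∈ S2) : ‖x‖ = 1 := by
  simpa [S2] using hx

/-- Two spherical caps of angular radius `a ∈ [0, π/2]` centered at `x, y ∈ S²` intersect
if and only if the angular distance between the centers is at most `2a`. -/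
theorem caps_intersect_iff (x y : EuclideanSpace ℝ (Fin 3)) (hx : x ∈ S2) (hy : y ∈ S2)
    (a : ℝ) (ha : a ∈ Set.Icc 0 (π / 2)) :
    (cap x a ∩ cap y a).Nonempty ↔ angDist x y ≤ 2 * a := by
  have hx1 : ‖x‖ = 1 := mem_S2_norm hx
  have hy1 : ‖y‖ = 1 := mem_S2_norm hy
  have hxx : ⟪x, x⟫ = 1 := by rw [real_inner_self_eq_norm_sq, hx1]; norm_num
  have hyy : ⟪y, y⟫ = 1 := by rw [real_inner_self_eq_norm_sq, hy1]; norm_num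
  obtain ⟨ha0, ha2⟩ := ha
  constructor
  · rintro ⟨z, ⟨hzS, hzx⟩, ⟨-, hzy⟩⟩
    have hz1 : ‖z‖ = 1 := mem_S2_norm hzS
    have tri := ang_triangle hx1 hy1 hz1 (z := z)
    have c1 : Real.arccos ⟪x, z⟫ = Real.arccos ⟪z, x⟫ := by rw [real_inner_comm]
    unfold angDist at hzx hzy ⊢
    rw [c1] at tri
    linarith
  · intro hθ
    by_cases hxy : x + y = 0
    · -- antipodal case: a = π/2, take any unit vector orthogonal to x
      have hxne : x ≠ 0 := by intro h; rw [h] at hx1; simp at hx1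
      have hspan : (ℝ ∙ x) ≠ ⊤ := by
        intro h
        have h1 : Module.finrank ℝ (ℝ ∙ x) = 1 := finrank_span_singleton hxne
        rw [h, finrank_top] at h1
        simp [finrank_euclideanSpace] at h1
      have hbot : (ℝ ∙ x)ᗮ ≠ ⊥ := fun h =>
        hspan (Submodule.orthogonal_eq_bot_iff.mp h)
      obtain ⟨w, hw, hwne⟩ := Submodule.exists_mem_ne_zero_of_ne_bot hbot
      set z : EuclideanSpace ℝ (Fin 3) := ‖w‖⁻¹ • w with hzdef
      have hz1 : ‖z‖ = 1 := by
        rw [hzdef, norm_smul]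
        simp [norm_ne_zero_iff.mpr hwne]
      have hzx0 : ⟪z, x⟫ = 0 := by
        have hw0 : ⟪w, x⟫ = 0 :=
          (Submodule.mem_orthogonal_singleton_iff_inner_left).mp hw
        rw [hzdef, real_inner_smul_left, hw0, mul_zero]
      have hya : y = -x := eq_neg_of_add_eq_zero_left (by rwa [add_comm] at hxy)
      have hpi2 : a = π / 2 := by
        have ht1 : ⟪x, y⟫ = -1 := by
          rw [hya, inner_neg_right, hxx]
        have hpi : angDist x y = π := by
          unfold angDist; rw [ht1, Real.arccos_neg_one]
        rw [hpi] at hθ; linarith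
      refine ⟨z, ⟨?_, ?_⟩, ?_, ?_⟩
      · simpa [S2] using hz1
      · unfold angDist; rw [hzx0, Real.arccos_zero, hpi2]
      · simpa [S2] using hz1
      · unfold angDist
        rw [hya, inner_neg_right, hzx0, neg_zero, Real.arccos_zero, hpi2]
    · -- generic case: take the normalized midpoint
      have ht1 : |⟪x, y⟫| ≤ 1 := abs_inner_le_one' hx1 hy1
      obtain ⟨ht1a, ht1b⟩ := abs_le.mp ht1
      have hnsq : ‖x + y‖ ^ 2 = 2 + 2 * ⟪x, y⟫ := by
        rw [← real_inner_self_eq_norm_sq, real_inner_add_add_self, hxx, hyy]; ring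
      have hnpos : 0 < ‖x + y‖ := norm_pos_iff.mpr hxy
      have ht1'' : -1 < ⟪x, y⟫ := by nlinarith
      set z : EuclideanSpace ℝ (Fin 3) := ‖x + y‖⁻¹ • (x + y) with hzdef
      have hz1 : ‖z‖ = 1 := by
        rw [hzdef, norm_smul]
        simp [hnpos.ne']
      set θ := Real.arccos ⟪x, y⟫ with hθdef
      have hθ0 : 0 ≤ θ := Real.arccos_nonneg _
      have hθpi : θ ≤ π := Real.arccos_le_pi _
      have hcosθ : Real.cos θ = ⟪x, y⟫ := Real.cos_arccos ht1a ht1b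
      have hhalf : Real.cos (θ / 2) = Real.sqrt ((1 + ⟪x, y⟫) / 2) := by
        rw [Real.cos_half (by linarith) hθpi, hcosθ]
      have hnval : ‖x + y‖ = Real.sqrt (2 + 2 * ⟪x, y⟫) := by
        rw [← hnsq, Real.sqrt_sq hnpos.le]
      have hval : ‖x + y‖⁻¹ * (1 + ⟪x, y⟫) = Real.cos (θ / 2) := by
        rw [hhalf, hnval]
        rw [show (2 : ℝ) + 2 * ⟪x, y⟫ = ((1 + ⟪x, y⟫) / 2) * 4 by ring,
          Real.sqrt_mul (by linarith), show (4 : ℝ) = 2 ^ 2 by norm_num,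
          Real.sqrt_sq (by norm_num)]
        exact half_sqrt_aux ht1''
      have hinner : ⟪z, x⟫ = Real.cos (θ / 2) := by
        rw [hzdef, real_inner_smul_left, inner_add_left, hxx]
        linear_combination hval + ‖x + y‖⁻¹ * real_inner_comm x y
      have hinner' : ⟪z, y⟫ = Real.cos (θ / 2) := by
        rw [hzdef, real_inner_smul_left, inner_add_left, hyy]
        linear_combination hval
      have harc : Real.arccos (Real.cos (θ / 2)) = θ / 2 :=
        Real.arccos_cos (by linarith) (by linarith)
      have hθ2 : θ ≤ 2 * a := by unfold angDist at hθ; rw [← hθdef] at hθ; exact hθ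
      refine ⟨z, ⟨?_, ?_⟩, ?_, ?_⟩
      · simpa [S2] using hz1
      · unfold angDist; rw [hinner, harc]; linarith
      · simpa [S2] using hz1
      · unfold angDist; rw [hinner', harc]; linarith
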